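/- If μ is supported on [0,∞), μ({0}) > 0 and ∫_{(0,∞)} x^{-1} dμ(x) < ∞, then there exists a continuous function R: [0,∞) → ℝ with R(t) → 0 as t → ∞ such that for all t > 0, ∫₀ᵗ Z_{t-s} Z_s ds = t·μ({0})·Z_t + 2·μ({0})·∫_{(0,∞)} x^{-1} dμ(x) + R(t). -/

import Mathlib

set_option linter.unusedSectionVars false

open MeasureTheory Real Set Filter intervalIntegral

/-- Laplace transform of a measure on ℝ. -/
noncomputable def lapZ (μ : Measure ℝ) (t : ℝ) : ℝ := ∫ x, Real.exp (-t * x) ∂μ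

noncomputable def lapF (μ : Measure ℝ) (t : ℝ) : ℝ := ∫ x in Set.Ioi 0, Real.exp (-t * x) ∂μ

section Aux
variable {μ : Measure ℝ} [IsProbabilityMeasure μ]

lemma lapF_nonneg (t : ℝ) : 0 ≤ lapF μ t := integral_nonneg fun _ => (Real.exp_pos _).le

lemma ae_nonneg (hsupp : μ (Set.Iio 0) = 0) : ∀ᵐ x ∂μ, 0 ≤ x := by
  rw [ae_iff]; convert hsupp using 2; ext x; simp [not_le]

lemma exp_integrable (hsupp : μ (Set.Iio 0) = 0) {t : ℝ} (ht : 0 ≤ t) :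
    Integrable (fun x => Real.exp (-t * x)) μ := by
  refine Integrable.mono' (integrable_const 1) ?_ ?_
  · exact (Real.continuous_exp.comp (continuous_const.mul continuous_id)).aestronglyMeasurable
  · filter_upwards [ae_nonneg hsupp] with x hx
    rw [Real.norm_eq_abs, Real.abs_exp]
    exact Real.exp_le_one_iff.mpr (by nlinarith)

lemma lapZ_eq (hsupp : μ (Set.Iio 0) = 0) {t : ℝ} (ht : 0 ≤ t) :
    lapZ μ t = (μ {0}).toReal + lapF μ t := by
  have hres : μ.restrict (Set.Ici 0) = μ :=
    Measure.restrict_eq_self_of_ae_mem (ae_nonneg hsupp)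
  have hI : Set.Ici (0:ℝ) = {0} ∪ Set.Ioi 0 := by
    ext x; simp [le_iff_eq_or_lt, eq_comm]
  have : lapZ μ t = ∫ x in Set.Ici 0, Real.exp (-t * x) ∂μ := by
    rw [lapZ]; conv_lhs => rw [← hres]
  rw [this, hI, setIntegral_union (by simp) measurableSet_Ioi
    ((exp_integrable hsupp ht).integrableOn)
    ((exp_integrable hsupp ht).integrableOn), integral_singleton]
  simp [lapF]
  rfl

lemma lapZ_nonneg (t : ℝ) : 0 ≤ lapZ μ t := integral_nonneg fun x => (Real.exp_pos _).le

lemma lapZ_le_one (hsupp : μ (Set.Iio 0) = 0) {t : ℝ} (ht : 0 ≤ t) : lapZ μ t ≤ 1 := by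
  have h1 : lapZ μ t ≤ ∫ _x : ℝ, (1:ℝ) ∂μ := by
    refine integral_mono_ae (exp_integrable hsupp ht) (integrable_const 1) ?_
    filter_upwards [ae_nonneg hsupp] with x hx
    exact Real.exp_le_one_iff.mpr (by nlinarith)
  simpa using h1

lemma lapZ_contOn (hsupp : μ (Set.Iio 0) = 0) : ContinuousOn (lapZ μ) (Set.Ici 0) := by
  apply continuousOn_of_dominated (bound := fun _ => (1:ℝ))
  · intro t ht
    exact (Real.continuous_exp.comp (continuous_const.mul continuous_id)).aestronglyMeasurable
  · intro t ht
    filter_upwards [ae_nonneg hsupp] with x hx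
    rw [Real.norm_eq_abs, Real.abs_exp]
    exact Real.exp_le_one_iff.mpr (by nlinarith [mem_Ici.mp ht])
  · exact integrable_const 1
  · filter_upwards with x
    exact (Real.continuous_exp.comp ((continuous_neg.comp continuous_id).mul continuous_const)).continuousOn


lemma lapF_le_one {t : ℝ} (ht : 0 ≤ t) : lapF μ t ≤ 1 := by
  have h1 : lapF μ t ≤ ∫ _x in Set.Ioi (0:ℝ), (1:ℝ) ∂μ := by
    refine integral_mono_ae ?_ (integrable_const 1) ?_
    · exact (integrable_const 1).mono'
        ((Real.continuous_exp.comp (continuous_const.mul continuous_id)).aestronglyMeasurable)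
        (by
          filter_upwards [ae_restrict_mem measurableSet_Ioi] with x hx
          rw [Real.norm_eq_abs, Real.abs_exp]
          exact Real.exp_le_one_iff.mpr (by nlinarith [mem_Ioi.mp hx]))
    · filter_upwards [ae_restrict_mem measurableSet_Ioi] with x hx
      exact Real.exp_le_one_iff.mpr (by nlinarith [mem_Ioi.mp hx])
  have h2 : ∫ _x in Set.Ioi (0:ℝ), (1:ℝ) ∂μ = (μ (Set.Ioi 0)).toReal := by
    rw [setIntegral_const, smul_eq_mul, mul_one]
    rfl
  have h3 : (μ (Set.Ioi 0)).toReal ≤ 1 := by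
    simpa using ENNReal.toReal_mono ENNReal.one_ne_top (prob_le_one (μ := μ) (s := Set.Ioi 0))
  linarith [h1, h2 ▸ h1]

lemma lapF_anti {t₁ t₂ : ℝ} (h1 : 0 ≤ t₁) (h2 : t₁ ≤ t₂) : lapF μ t₂ ≤ lapF μ t₁ := by
  refine integral_mono_ae ?_ ?_ ?_
  · exact (integrable_const 1).mono'
      ((Real.continuous_exp.comp (continuous_const.mul continuous_id)).aestronglyMeasurable)
      (by
        filter_upwards [ae_restrict_mem measurableSet_Ioi] with x hx
        rw [Real.norm_eq_abs, Real.abs_exp]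
        exact Real.exp_le_one_iff.mpr (by nlinarith [mem_Ioi.mp hx]))
  · exact (integrable_const 1).mono'
      ((Real.continuous_exp.comp (continuous_const.mul continuous_id)).aestronglyMeasurable)
      (by
        filter_upwards [ae_restrict_mem measurableSet_Ioi] with x hx
        rw [Real.norm_eq_abs, Real.abs_exp]
        exact Real.exp_le_one_iff.mpr (by nlinarith [mem_Ioi.mp hx]))
  · filter_upwards [ae_restrict_mem measurableSet_Ioi] with x hx
    exact Real.exp_le_exp.mpr (by nlinarith [mem_Ioi.mp hx])

lemma lapF_contOn : ContinuousOn (lapF μ) (Set.Ici 0) := by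
  apply continuousOn_of_dominated (bound := fun _ => (1:ℝ))
  · intro t ht
    exact (Real.continuous_exp.comp (continuous_const.mul continuous_id)).aestronglyMeasurable
  · intro t ht
    filter_upwards [ae_restrict_mem measurableSet_Ioi] with x hx
    rw [Real.norm_eq_abs, Real.abs_exp]
    exact Real.exp_le_one_iff.mpr (by nlinarith [mem_Ioi.mp hx, mem_Ici.mp ht])
  · exact integrable_const 1
  · filter_upwards with x
    exact (Real.continuous_exp.comp ((continuous_neg.comp continuous_id).mul continuous_const)).continuousOn


lemma inner_exp {x : ℝ} (hx : 0 < x) (t : ℝ) :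
    ∫ s in (0:ℝ)..t, Real.exp (-s * x) = (1 - Real.exp (-t * x)) * x⁻¹ := by
  have h : ∀ s : ℝ, HasDerivAt (fun u => -Real.exp (-u * x) / x) (Real.exp (-s * x)) s := by
    intro s
    have h1 : HasDerivAt (fun u : ℝ => -u * x) (-x) s := by
      simpa using ((hasDerivAt_id s).neg.mul_const x)
    have h2 := (Real.hasDerivAt_exp (-s * x)).comp s h1
    have h3 := (h2.neg).div_const x
    rw [mul_neg, neg_neg, mul_div_assoc, div_self hx.ne', mul_one] at h3
    exact h3
  rw [intervalIntegral.integral_eq_sub_of_hasDerivAt (fun s _ => h s)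
    ((Real.continuous_exp.comp (continuous_id.neg.mul continuous_const)).intervalIntegrable 0 t)]
  field_simp
  ring_nf
  rw [Real.exp_zero]
  ring

lemma g_closed {t : ℝ} (ht : 0 ≤ t) :
    ∫ s in (0:ℝ)..t, lapF μ s = ∫ x in Set.Ioi 0, (1 - Real.exp (-t * x)) * x⁻¹ ∂μ := by
  rw [intervalIntegral.integral_of_le ht]
  have hmeas : AEStronglyMeasurable (fun p : ℝ × ℝ => Real.exp (-p.1 * p.2))
      ((volume.restrict (Set.Ioc 0 t)).prod (μ.restrict (Set.Ioi 0))) :=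
    (Real.continuous_exp.comp ((continuous_fst.neg).mul continuous_snd)).aestronglyMeasurable
  have hnorm : (fun s => ∫ x, ‖Real.exp (-s * x)‖ ∂(μ.restrict (Set.Ioi 0))) = lapF μ := by
    funext s; simp [lapF, Real.norm_eq_abs, Real.abs_exp]
  have hintg : Integrable (Function.uncurry (fun s x : ℝ => Real.exp (-s * x)))
      ((volume.restrict (Set.Ioc 0 t)).prod (μ.restrict (Set.Ioi 0))) := by
    show Integrable (fun p : ℝ × ℝ => Real.exp (-p.1 * p.2))
      ((volume.restrict (Set.Ioc 0 t)).prod (μ.restrict (Set.Ioi 0)))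
    rw [integrable_prod_iff hmeas]
    constructor
    · filter_upwards [ae_restrict_mem measurableSet_Ioc] with s hs
      refine (integrable_const 1).mono'
        ((Real.continuous_exp.comp (continuous_const.mul continuous_id)).aestronglyMeasurable) ?_
      filter_upwards [ae_restrict_mem measurableSet_Ioi] with x hx
      rw [Real.norm_eq_abs, Real.abs_exp]
      exact Real.exp_le_one_iff.mpr (by nlinarith [hs.1, Set.mem_Ioi.mp hx])
    · rw [hnorm]
      exact ((lapF_contOn.mono Set.Icc_subset_Ici_self).integrableOn_compact isCompact_Icc).mono_set
        Set.Ioc_subset_Icc_self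
  have hswap := MeasureTheory.integral_integral_swap hintg
  rw [show (fun s => lapF μ s) = (fun s => ∫ x in Set.Ioi 0, Real.exp (-s * x) ∂μ) from rfl]
  rw [hswap]
  refine setIntegral_congr_ae measurableSet_Ioi ?_
  filter_upwards with x hx
  rw [← intervalIntegral.integral_of_le ht, inner_exp hx t]


lemma tendsto_g (hint : IntegrableOn (fun x => x⁻¹) (Set.Ioi 0) μ) :
    Tendsto (fun t => ∫ x in Set.Ioi 0, (1 - Real.exp (-t * x)) * x⁻¹ ∂μ) atTop
      (nhds (∫ x in Set.Ioi 0, x⁻¹ ∂μ)) := by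
  apply MeasureTheory.tendsto_integral_filter_of_dominated_convergence (fun x => x⁻¹)
  · filter_upwards with t
    refine ContinuousOn.aestronglyMeasurable ?_ measurableSet_Ioi
    exact ((continuous_const.sub (Real.continuous_exp.comp
      (continuous_const.mul continuous_id))).continuousOn).mul
      (continuousOn_inv₀.mono fun x hx => ne_of_gt (Set.mem_Ioi.mp hx))
  · filter_upwards [eventually_ge_atTop (0:ℝ)] with t ht
    filter_upwards [ae_restrict_mem measurableSet_Ioi] with x hx
    have hx' : (0:ℝ) < x := Set.mem_Ioi.mp hx
    have he : Real.exp (-t * x) ≤ 1 := Real.exp_le_one_iff.mpr (by nlinarith)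
    have he' : 0 < Real.exp (-t * x) := Real.exp_pos _
    rw [Real.norm_eq_abs, abs_mul, abs_inv, abs_of_pos hx', abs_of_nonneg (by linarith)]
    have : (1 - Real.exp (-t*x)) ≤ 1 := by linarith
    nlinarith [inv_pos.mpr hx']
  · exact hint
  · filter_upwards [ae_restrict_mem measurableSet_Ioi] with x hx
    have hx' : (0:ℝ) < x := Set.mem_Ioi.mp hx
    have h1 : Tendsto (fun t : ℝ => Real.exp (-t * x)) atTop (nhds 0) := by
      have : Tendsto (fun t : ℝ => t * x) atTop atTop :=
        Tendsto.atTop_mul_const hx' tendsto_id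
      simpa [Function.comp_def, neg_mul] using
        (Real.tendsto_exp_neg_atTop_nhds_zero.comp this)
    have h2 := ((tendsto_const_nhds (x := (1:ℝ))).sub h1).mul_const x⁻¹
    simpa using h2

lemma tendsto_tf (hint : IntegrableOn (fun x => x⁻¹) (Set.Ioi 0) μ) :
    Tendsto (fun t => t * lapF μ t) atTop (nhds 0) := by
  have key : ∀ t : ℝ, t * lapF μ t = ∫ x in Set.Ioi 0, t * Real.exp (-t * x) ∂μ := by
    intro t; rw [lapF, ← MeasureTheory.integral_const_mul]
  simp_rw [key]
  have main : Tendsto (fun t => ∫ x in Set.Ioi 0, t * Real.exp (-t * x) ∂μ) atTop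
      (nhds (∫ _x in Set.Ioi (0:ℝ), (0:ℝ) ∂μ)) := by
    apply MeasureTheory.tendsto_integral_filter_of_dominated_convergence (fun x => x⁻¹)
    · filter_upwards with t
      exact (continuous_const.mul (Real.continuous_exp.comp
        (continuous_const.mul continuous_id))).aestronglyMeasurable
    · filter_upwards [eventually_ge_atTop (0:ℝ)] with t ht
      filter_upwards [ae_restrict_mem measurableSet_Ioi] with x hx
      have hx' : (0:ℝ) < x := Set.mem_Ioi.mp hx
      rw [Real.norm_eq_abs, abs_mul, abs_of_nonneg ht, Real.abs_exp, neg_mul, Real.exp_neg,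
        ← div_eq_mul_inv, ← one_div, div_le_div_iff₀ (Real.exp_pos _) hx']
      nlinarith [Real.add_one_le_exp (t * x)]
    · exact hint
    · filter_upwards [ae_restrict_mem measurableSet_Ioi] with x hx
      have hx' : (0:ℝ) < x := Set.mem_Ioi.mp hx
      have h1 : Tendsto (fun t : ℝ => t * x) atTop atTop :=
        Tendsto.atTop_mul_const hx' tendsto_id
      have h2 := (Real.tendsto_pow_mul_exp_neg_atTop_nhds_zero 1).comp h1
      have h3 : Tendsto (fun t : ℝ => (t * x) * Real.exp (-(t * x))) atTop (nhds 0) := by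
        simpa [Function.comp_def] using h2
      have h4 := h3.mul_const x⁻¹
      rw [zero_mul] at h4
      refine h4.congr fun t => ?_
      rw [neg_mul]
      field_simp
  simpa using main

lemma tendsto_lapF : Tendsto (fun t => lapF μ t) atTop (nhds 0) := by
  have main : Tendsto (fun t => lapF μ t) atTop
      (nhds (∫ _x in Set.Ioi (0:ℝ), (0:ℝ) ∂μ)) := by
    apply MeasureTheory.tendsto_integral_filter_of_dominated_convergence (fun _ => (1:ℝ))
    · filter_upwards with t
      exact (Real.continuous_exp.comp (continuous_const.mul continuous_id)).aestronglyMeasurable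
    · filter_upwards [eventually_ge_atTop (0:ℝ)] with t ht
      filter_upwards [ae_restrict_mem measurableSet_Ioi] with x hx
      rw [Real.norm_eq_abs, Real.abs_exp]
      exact Real.exp_le_one_iff.mpr (by nlinarith [Set.mem_Ioi.mp hx])
    · exact integrable_const 1
    · filter_upwards [ae_restrict_mem measurableSet_Ioi] with x hx
      have hx' : (0:ℝ) < x := Set.mem_Ioi.mp hx
      have h1 : Tendsto (fun t : ℝ => t * x) atTop atTop :=
        Tendsto.atTop_mul_const hx' tendsto_id
      simpa [Function.comp_def, neg_mul] using (Real.tendsto_exp_neg_atTop_nhds_zero.comp h1)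
  simpa using main


lemma intInt_lapF {t : ℝ} (ht : 0 ≤ t) : IntervalIntegrable (lapF μ) volume 0 t :=
  ContinuousOn.intervalIntegrable
    (lapF_contOn.mono (by rw [Set.uIcc_of_le ht]; exact fun s hs => hs.1))

lemma contOn_lapF_sub {t : ℝ} (ht : 0 ≤ t) :
    ContinuousOn (fun s => lapF μ (t - s)) (Set.uIcc 0 t) := by
  apply lapF_contOn.comp ((continuous_const.sub continuous_id).continuousOn)
  intro s hs
  rw [Set.uIcc_of_le ht] at hs
  simp only [Set.mem_Ici, id_eq, Pi.sub_apply]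
  linarith [hs.2]

lemma conv_expand (hsupp : μ (Set.Iio 0) = 0) {t : ℝ} (ht : 0 ≤ t) :
    (∫ s in (0:ℝ)..t, lapZ μ (t - s) * lapZ μ s)
      = (μ {0}).toReal * (μ {0}).toReal * t
        + 2 * (μ {0}).toReal * (∫ s in (0:ℝ)..t, lapF μ s)
        + ∫ s in (0:ℝ)..t, lapF μ (t - s) * lapF μ s := by
  set a := (μ {0}).toReal with ha
  have hmem : ∀ s ∈ Set.uIcc (0:ℝ) t, (0:ℝ) ≤ s ∧ 0 ≤ t - s := by
    intro s hs; rw [Set.uIcc_of_le ht] at hs; exact ⟨hs.1, by linarith [hs.2]⟩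
  have hcongr : ∀ s ∈ Set.uIcc (0:ℝ) t, lapZ μ (t - s) * lapZ μ s
      = a * a + (a * lapF μ s + (a * lapF μ (t - s) + lapF μ (t - s) * lapF μ s)) := by
    intro s hs
    rw [lapZ_eq hsupp (hmem s hs).2, lapZ_eq hsupp (hmem s hs).1]; ring
  rw [intervalIntegral.integral_congr hcongr]
  have hF := intInt_lapF (μ := μ) ht
  have hFc := contOn_lapF_sub (μ := μ) ht
  have hF2 : IntervalIntegrable (fun s => lapF μ (t - s)) volume 0 t :=
    hFc.intervalIntegrable
  have hFmul : IntervalIntegrable (fun s => lapF μ (t - s) * lapF μ s) volume 0 t :=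
    (hFc.mul (lapF_contOn.mono (by rw [Set.uIcc_of_le ht]; exact fun s hs => hs.1))).intervalIntegrable
  rw [intervalIntegral.integral_add intervalIntegrable_const
    ((hF.const_mul a).add ((hF2.const_mul a).add hFmul)),
    intervalIntegral.integral_add (hF.const_mul a) ((hF2.const_mul a).add hFmul),
    intervalIntegral.integral_add (hF2.const_mul a) hFmul,
    intervalIntegral.integral_const, intervalIntegral.integral_const_mul,
    intervalIntegral.integral_const_mul]
  have e3 : (∫ s in (0:ℝ)..t, lapF μ (t - s)) = ∫ s in (0:ℝ)..t, lapF μ s := by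
    simpa using intervalIntegral.integral_comp_sub_left (lapF μ) t
  rw [e3]
  simp only [smul_eq_mul, sub_zero]
  ring

lemma g_le (hint : IntegrableOn (fun x => x⁻¹) (Set.Ioi 0) μ) {t : ℝ} (ht : 0 ≤ t) :
    (∫ s in (0:ℝ)..t, lapF μ s) ≤ ∫ x in Set.Ioi 0, x⁻¹ ∂μ := by
  rw [g_closed ht]
  refine integral_mono_ae ?_ hint ?_
  · refine hint.mono' ?_ ?_
    · refine ContinuousOn.aestronglyMeasurable ?_ measurableSet_Ioi
      exact ((continuous_const.sub (Real.continuous_exp.comp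
        (continuous_const.mul continuous_id))).continuousOn).mul
        (continuousOn_inv₀.mono fun x hx => ne_of_gt (Set.mem_Ioi.mp hx))
    · filter_upwards [ae_restrict_mem measurableSet_Ioi] with x hx
      have hx' : (0:ℝ) < x := Set.mem_Ioi.mp hx
      have he : Real.exp (-t * x) ≤ 1 := Real.exp_le_one_iff.mpr (by nlinarith)
      have he' : 0 < Real.exp (-t * x) := Real.exp_pos _
      rw [Real.norm_eq_abs, abs_mul, abs_inv, abs_of_pos hx', abs_of_nonneg (by linarith)]
      nlinarith [inv_pos.mpr hx']
  · filter_upwards [ae_restrict_mem measurableSet_Ioi] with x hx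
    have hx' : (0:ℝ) < x := Set.mem_Ioi.mp hx
    have he' : 0 < Real.exp (-t * x) := Real.exp_pos _
    nlinarith [inv_pos.mpr hx']

lemma C_nonneg {t : ℝ} (ht : 0 ≤ t) :
    0 ≤ ∫ s in (0:ℝ)..t, lapF μ (t - s) * lapF μ s :=
  intervalIntegral.integral_nonneg ht fun s _ =>
    mul_nonneg (lapF_nonneg _) (lapF_nonneg _)

lemma C_le (hint : IntegrableOn (fun x => x⁻¹) (Set.Ioi 0) μ) {t : ℝ} (ht : 0 ≤ t) :
    (∫ s in (0:ℝ)..t, lapF μ (t - s) * lapF μ s)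
      ≤ 2 * (∫ x in Set.Ioi 0, x⁻¹ ∂μ) * lapF μ (t / 2) := by
  have hF := intInt_lapF (μ := μ) ht
  have hFc := contOn_lapF_sub (μ := μ) ht
  have hF2 : IntervalIntegrable (fun s => lapF μ (t - s)) volume 0 t := hFc.intervalIntegrable
  have step1 : (∫ s in (0:ℝ)..t, lapF μ (t - s) * lapF μ s)
      ≤ ∫ s in (0:ℝ)..t, lapF μ (t/2) * (lapF μ s + lapF μ (t - s)) := by
    apply intervalIntegral.integral_mono_on ht
      ((hFc.mul (lapF_contOn.mono (by rw [Set.uIcc_of_le ht]; exact fun s hs => hs.1))).intervalIntegrable)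
      ((hF.add hF2).const_mul _)
    intro s hs
    simp only [Pi.mul_apply]
    rcases le_total s (t/2) with h | h
    · have h1 : lapF μ (t - s) ≤ lapF μ (t/2) := lapF_anti (by linarith) (by linarith)
      nlinarith [lapF_nonneg (μ := μ) s, lapF_nonneg (μ := μ) (t - s), lapF_nonneg (μ := μ) (t/2)]
    · have h1 : lapF μ s ≤ lapF μ (t/2) := lapF_anti (by linarith) h
      nlinarith [lapF_nonneg (μ := μ) s, lapF_nonneg (μ := μ) (t - s), lapF_nonneg (μ := μ) (t/2)]
  have e3 : (∫ s in (0:ℝ)..t, lapF μ (t - s)) = ∫ s in (0:ℝ)..t, lapF μ s := by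
    simpa using intervalIntegral.integral_comp_sub_left (lapF μ) t
  rw [intervalIntegral.integral_const_mul, intervalIntegral.integral_add hF hF2, e3] at step1
  have hg := g_le (μ := μ) hint ht
  have hf2 := lapF_nonneg (μ := μ) (t/2)
  nlinarith

lemma tendsto_C (hint : IntegrableOn (fun x => x⁻¹) (Set.Ioi 0) μ) :
    Tendsto (fun t => ∫ s in (0:ℝ)..t, lapF μ (t - s) * lapF μ s) atTop (nhds 0) := by
  have hI : 0 ≤ ∫ x in Set.Ioi 0, x⁻¹ ∂μ :=
    setIntegral_nonneg measurableSet_Ioi fun x hx => (inv_pos.mpr (Set.mem_Ioi.mp hx)).le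
  have hup : Tendsto (fun t : ℝ => 2 * (∫ x in Set.Ioi 0, x⁻¹ ∂μ) * lapF μ (t / 2)) atTop (nhds 0) := by
    have h1 : Tendsto (fun t : ℝ => t / 2) atTop atTop := tendsto_id.atTop_div_const two_pos
    have h2 := (tendsto_lapF (μ := μ)).comp h1
    have := h2.const_mul (2 * (∫ x in Set.Ioi 0, x⁻¹ ∂μ))
    simpa [Function.comp_def] using this
  refine tendsto_of_tendsto_of_tendsto_of_le_of_le' tendsto_const_nhds hup ?_ ?_
  · filter_upwards [eventually_ge_atTop (0:ℝ)] with t ht using C_nonneg ht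
  · filter_upwards [eventually_ge_atTop (0:ℝ)] with t ht using C_le hint ht


lemma G_contOn (hsupp : μ (Set.Iio 0) = 0) :
    ContinuousOn (fun t => ∫ u in (0:ℝ)..1, lapZ μ (t - t * u) * lapZ μ (t * u)) (Set.Ici 0) := by
  have hrw : ∀ t : ℝ, (∫ u in (0:ℝ)..1, lapZ μ (t - t * u) * lapZ μ (t * u))
      = ∫ u in Set.Ioc (0:ℝ) 1, lapZ μ (t - t * u) * lapZ μ (t * u) := fun t =>
    intervalIntegral.integral_of_le zero_le_one
  simp_rw [hrw]
  apply continuousOn_of_dominated (bound := fun _ => (1:ℝ))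
  · intro t ht
    refine ContinuousOn.aestronglyMeasurable ?_ measurableSet_Ioc
    have hc1 : ContinuousOn (fun u : ℝ => lapZ μ (t - t * u)) (Set.Ioc 0 1) := by
      apply (lapZ_contOn hsupp).comp (by fun_prop)
      intro u hu
      simp only [Set.mem_Ici]
      nlinarith [hu.1, hu.2, Set.mem_Ici.mp ht]
    have hc2 : ContinuousOn (fun u : ℝ => lapZ μ (t * u)) (Set.Ioc 0 1) := by
      apply (lapZ_contOn hsupp).comp (by fun_prop)
      intro u hu
      simp only [Set.mem_Ici]
      nlinarith [hu.1, hu.2, Set.mem_Ici.mp ht]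
    exact hc1.mul hc2
  · intro t ht
    filter_upwards [ae_restrict_mem measurableSet_Ioc] with u hu
    have h1 : 0 ≤ t - t * u := by nlinarith [hu.1, hu.2, Set.mem_Ici.mp ht]
    have h2 : 0 ≤ t * u := by nlinarith [hu.1, hu.2, Set.mem_Ici.mp ht]
    rw [Real.norm_eq_abs, abs_mul, abs_of_nonneg (lapZ_nonneg _), abs_of_nonneg (lapZ_nonneg _)]
    nlinarith [lapZ_le_one hsupp h1, lapZ_le_one hsupp h2, lapZ_nonneg (μ := μ) (t - t*u),
      lapZ_nonneg (μ := μ) (t*u)]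
  · exact integrable_const 1
  · filter_upwards [ae_restrict_mem measurableSet_Ioc] with u hu
    have hc1 : ContinuousOn (fun t : ℝ => lapZ μ (t - t * u)) (Set.Ici 0) := by
      apply (lapZ_contOn hsupp).comp (by fun_prop)
      intro t ht
      simp only [Set.mem_Ici]
      nlinarith [hu.1, hu.2, Set.mem_Ici.mp ht]
    have hc2 : ContinuousOn (fun t : ℝ => lapZ μ (t * u)) (Set.Ici 0) := by
      apply (lapZ_contOn hsupp).comp (by fun_prop)
      intro t ht
      simp only [Set.mem_Ici]
      nlinarith [hu.1, hu.2, Set.mem_Ici.mp ht]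
    exact hc1.mul hc2

lemma conv_eq (t : ℝ) :
    t * (∫ u in (0:ℝ)..1, lapZ μ (t - t * u) * lapZ μ (t * u))
      = ∫ s in (0:ℝ)..t, lapZ μ (t - s) * lapZ μ s := by
  have := intervalIntegral.smul_integral_comp_mul_left
    (a := (0:ℝ)) (b := 1) (fun s => lapZ μ (t - s) * lapZ μ s) t
  simpa using this


end Aux

/-- If `μ` is a probability measure on `[0,∞)` with `μ({0}) > 0` and
`∫_{(0,∞)} x⁻¹ dμ < ∞`, there is a continuous `R : [0,∞) → ℝ` with `R(t) → 0` such that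
`∫₀ᵗ Z_{t-s} Z_s ds = t μ({0}) Z_t + 2 μ({0}) ∫_{(0,∞)} x⁻¹ dμ + R(t)` for `t > 0`. -/
theorem stmt_9 (μ : Measure ℝ) [IsProbabilityMeasure μ] (hsupp : μ (Set.Iio 0) = 0)
    (hatom : 0 < μ {0})
    (hint : IntegrableOn (fun x => x⁻¹) (Set.Ioi 0) μ) :
    ∃ R : ℝ → ℝ, ContinuousOn R (Set.Ici 0) ∧ Tendsto R atTop (nhds 0) ∧
      ∀ t : ℝ, 0 < t →
        (∫ s in (0:ℝ)..t, lapZ μ (t - s) * lapZ μ s)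
          = t * (μ {0}).toReal * lapZ μ t
            + 2 * (μ {0}).toReal * (∫ x in Set.Ioi 0, x⁻¹ ∂μ) + R t := by
  refine ⟨fun t => t * (∫ u in (0:ℝ)..1, lapZ μ (t - t * u) * lapZ μ (t * u))
      - t * (μ {0}).toReal * lapZ μ t
      - 2 * (μ {0}).toReal * (∫ x in Set.Ioi 0, x⁻¹ ∂μ), ?_, ?_, ?_⟩
  · exact ((continuousOn_id.mul (G_contOn hsupp)).sub
      ((continuousOn_id.mul continuousOn_const).mul (lapZ_contOn hsupp))).sub continuousOn_const
  · have hmain : Tendsto (fun t =>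
        2 * (μ {0}).toReal * (∫ x in Set.Ioi 0, (1 - Real.exp (-t * x)) * x⁻¹ ∂μ)
        + (∫ s in (0:ℝ)..t, lapF μ (t - s) * lapF μ s)
        - (μ {0}).toReal * (t * lapF μ t)
        - 2 * (μ {0}).toReal * (∫ x in Set.Ioi 0, x⁻¹ ∂μ))
        atTop (nhds (2 * (μ {0}).toReal * (∫ x in Set.Ioi 0, x⁻¹ ∂μ) + 0
          - (μ {0}).toReal * 0 - 2 * (μ {0}).toReal * (∫ x in Set.Ioi 0, x⁻¹ ∂μ))) :=
      ((((tendsto_g hint).const_mul (2 * (μ {0}).toReal)).add (tendsto_C hint)).sub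
        ((tendsto_tf hint).const_mul ((μ {0}).toReal))).sub tendsto_const_nhds
    rw [show 2 * (μ {0}).toReal * (∫ x in Set.Ioi 0, x⁻¹ ∂μ) + 0
          - (μ {0}).toReal * 0 - 2 * (μ {0}).toReal * (∫ x in Set.Ioi 0, x⁻¹ ∂μ) = 0 by ring]
      at hmain
    refine Tendsto.congr' ?_ hmain
    filter_upwards [eventually_ge_atTop (0:ℝ)] with t ht
    rw [conv_eq t, conv_expand hsupp ht, g_closed ht, lapZ_eq hsupp ht]
    ring
  · intro t ht
    rw [← conv_eq t]
    ring
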